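/- arXiv:1902.00787 — 5 statements merged into one kernel-verified Lean document; each statement's English description precedes it below -/
import Mathlib

section
/- Let ⟪−,−⟫ : A × A → A ⊗ A be a k-bilinear map and let n, m be its associated trilinear maps. Then ⟪−,−⟫ is a double Poisson bracket on A if and only if for all a, b, c ∈ A and all f, g ∈ A* the following three identities hold: (cyclicity) m(f,b,g)(a) = −g(n(a,f,b)); (quartic Stasheff identity) n(ab, f, c) = n(a, b·f, c) + a·n(b, f, c); (quintic Stasheff identity) n(n(a,f,b), g, c) + n(a, m(f,b,g), c) − n(a, f, n(b,g,c)) = 0. Moreover, the assignment ⟪−,−⟫ ↦ n is injective: two k-bilinear maps A × A → A ⊗ A with the same associated trilinear map n coincide. (This is the degree d = 0, trivially graded case of Theorem 5.1, identifying fully manageable nice pre-Calabi-Yau structures on A with double Poisson brackets on A.) -/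
open TensorProduct

noncomputable section

set_option linter.unusedSectionVars false

variable {k : Type*} [Field k] [CharZero k]
variable {A : Type*} [NonUnitalRing A] [Module k A] [SMulCommClass k A A] [IsScalarTower k A A]

/-- Outer left action of `A` on `A ⊗ A`: `a · (u ⊗ v) = (a*u) ⊗ v`. -/
def lAct (a : A) : A ⊗[k] A →ₗ[k] A ⊗[k] A :=
  TensorProduct.map (LinearMap.mulLeft k a) LinearMap.id

/-- Outer right action of `A` on `A ⊗ A`: `(u ⊗ v) · b = u ⊗ (v*b)`. -/
def rAct (b : A) : A ⊗[k] A →ₗ[k] A ⊗[k] A :=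
  TensorProduct.map LinearMap.id (LinearMap.mulRight k b)

/-- `⟪a, u ⊗ v⟫_L = ⟪a,u⟫ ⊗ v`, extended linearly. -/
def brL (br : A →ₗ[k] A →ₗ[k] A ⊗[k] A) (a : A) :
    A ⊗[k] A →ₗ[k] (A ⊗[k] A) ⊗[k] A :=
  TensorProduct.map (br a) LinearMap.id

/-- The cyclic permutation `σ(u ⊗ v ⊗ w) = w ⊗ u ⊗ v` on `(A ⊗ A) ⊗ A`. -/
def cyc : (A ⊗[k] A) ⊗[k] A →ₗ[k] (A ⊗[k] A) ⊗[k] A :=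
  (TensorProduct.assoc k A A A).symm.toLinearMap ∘ₗ
    (TensorProduct.comm k (A ⊗[k] A) A).toLinearMap

/-- A double Poisson bracket: antisymmetry, Leibniz, and double Jacobi. -/
def IsDoublePoisson (br : A →ₗ[k] A →ₗ[k] A ⊗[k] A) : Prop :=
  (∀ a b : A, br b a = - (TensorProduct.comm k A A) (br a b)) ∧
  (∀ a b c : A, br a (b * c) = rAct c (br a b) + lAct b (br a c)) ∧
  (∀ a b c : A,
    brL br a (br b c) + cyc (brL br b (br c a)) + cyc (cyc (brL br c (br a b))) = 0)

/-- `(f ⊗ g) : A ⊗ A → k`. -/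
def pair2 (f g : Module.Dual k A) : A ⊗[k] A →ₗ[k] k :=
  TensorProduct.lift ((LinearMap.mul k k).compl₁₂ f g)

/-- The associated trilinear map `n(a,f,b) = (id ⊗ f)(⟪b,a⟫)`. -/
def nMap (br : A →ₗ[k] A →ₗ[k] A ⊗[k] A) (a : A) (f : Module.Dual k A) (b : A) : A :=
  TensorProduct.rid k A (TensorProduct.map LinearMap.id f (br b a))

/-- The associated trilinear map `m(f,a,g)(b) = (f ⊗ g)(⟪b,a⟫)`. -/
def mMap (br : A →ₗ[k] A →ₗ[k] A ⊗[k] A) (f : Module.Dual k A) (a : A)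
    (g : Module.Dual k A) : Module.Dual k A :=
  pair2 f g ∘ₗ br.flip a

/-- The left action of `A` on `A* = Hom_k(A,k)`: `(a·f)(c) = f(c*a)`. -/
def dL (a : A) (f : Module.Dual k A) : Module.Dual k A :=
  f ∘ₗ LinearMap.mulRight k a

/-- The right action of `A` on `A* = Hom_k(A,k)`: `(f·b)(c) = f(b*c)`. -/
def dR (f : Module.Dual k A) (b : A) : Module.Dual k A :=
  f ∘ₗ LinearMap.mulLeft k b

/- ### Auxiliary machinery -/

/-- `phi f (m ⊗ y) = f y • m`. -/
def phi {M : Type*} [AddCommGroup M] [Module k M] (f : Module.Dual k A) :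
    M ⊗[k] A →ₗ[k] M :=
  (TensorProduct.rid k M).toLinearMap ∘ₗ TensorProduct.map LinearMap.id f

@[simp] lemma phi_tmul {M : Type*} [AddCommGroup M] [Module k M] (f : Module.Dual k A)
    (m : M) (y : A) : phi f (m ⊗ₜ[k] y) = f y • m := by
  simp [phi]

/-- Functionals on the second factor separate points of `M ⊗ A`. -/
lemma sep {M : Type*} [AddCommGroup M] [Module k M] (u : M ⊗[k] A)
    (h : ∀ f : Module.Dual k A, phi f u = 0) : u = 0 := by
  classical
  set b := Module.Basis.ofVectorSpace k A with hb
  let e : M ⊗[k] A ≃ₗ[k] (_ →₀ M) :=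
    (TensorProduct.congr (LinearEquiv.refl k M) b.repr).trans
      (TensorProduct.finsuppScalarRight k k M _)
  have key : ∀ (u : M ⊗[k] A) (i), e u i = phi (b.coord i) u := by
    intro u i
    induction u using TensorProduct.induction_on with
    | zero => simp
    | tmul m y =>
        simp [e, TensorProduct.finsuppScalarRight_apply_tmul_apply, Module.Basis.coord_apply]
    | add x y hx hy => simp [map_add, hx, hy]
  have h0 : e u = 0 := by
    ext i; rw [key, h]; simp
  have := e.injective (by simpa using h0)
  simpa using this

lemma sep_eq {M : Type*} [AddCommGroup M] [Module k M] (u v : M ⊗[k] A)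
    (h : ∀ f : Module.Dual k A, phi f u = phi f v) : u = v := by
  have := sep (u - v) (fun f => by rw [map_sub, h, sub_self])
  exact sub_eq_zero.mp this

/-- `psi f (x ⊗ y) = f x • y`. -/
def psi (f : Module.Dual k A) : A ⊗[k] A →ₗ[k] A :=
  phi f ∘ₗ (TensorProduct.comm k A A).toLinearMap

@[simp] lemma psi_tmul (f : Module.Dual k A) (x y : A) :
    psi f (x ⊗ₜ[k] y) = f x • y := by simp [psi]

@[simp] lemma pair2_tmul (f g : Module.Dual k A) (x y : A) :
    pair2 f g (x ⊗ₜ[k] y) = f x * g y := by simp [pair2]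

lemma nMap_eq (br : A →ₗ[k] A →ₗ[k] A ⊗[k] A) (a : A) (f : Module.Dual k A) (b : A) :
    nMap br a f b = phi f (br b a) := rfl

lemma mMap_apply (br : A →ₗ[k] A →ₗ[k] A ⊗[k] A) (f g : Module.Dual k A) (a b : A) :
    mMap br f a g b = pair2 f g (br b a) := rfl

lemma phi_neg (f : Module.Dual k A) (u : A ⊗[k] A) : phi (-f) u = - phi f u := by
  induction u using TensorProduct.induction_on with
  | zero => simp
  | tmul x y => simp [neg_smul]
  | add x y hx hy => simp [map_add, hx, hy]; abel

lemma psi_comm (f : Module.Dual k A) (u : A ⊗[k] A) :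
    psi f ((TensorProduct.comm k A A) u) = phi f u := by
  induction u using TensorProduct.induction_on with
  | zero => simp
  | tmul x y => simp
  | add x y hx hy => simp [map_add, hx, hy]

lemma pair2_comm (f g : Module.Dual k A) (u : A ⊗[k] A) :
    pair2 f g ((TensorProduct.comm k A A) u) = pair2 g f u := by
  induction u using TensorProduct.induction_on with
  | zero => simp
  | tmul x y => simp [mul_comm]
  | add x y hx hy => simp [map_add, hx, hy]

lemma apply_phi (f g : Module.Dual k A) (u : A ⊗[k] A) :
    g (phi f u) = pair2 g f u := by
  induction u using TensorProduct.induction_on with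
  | zero => simp
  | tmul x y => simp [mul_comm]
  | add x y hx hy => simp [map_add, hx, hy]

lemma apply_psi (f g : Module.Dual k A) (u : A ⊗[k] A) :
    g (psi f u) = pair2 f g u := by
  induction u using TensorProduct.induction_on with
  | zero => simp
  | tmul x y => simp
  | add x y hx hy => simp [map_add, hx, hy]

lemma phi_rAct (f : Module.Dual k A) (b : A) (u : A ⊗[k] A) :
    phi f (rAct b u) = phi (dL b f) u := by
  induction u using TensorProduct.induction_on with
  | zero => simp
  | tmul x y => simp [rAct, dL]
  | add x y hx hy => simp [map_add, hx, hy]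

lemma phi_lAct (f : Module.Dual k A) (a : A) (u : A ⊗[k] A) :
    phi f (lAct a u) = a * phi f u := by
  induction u using TensorProduct.induction_on with
  | zero => simp
  | tmul x y => simp [lAct, mul_smul_comm]
  | add x y hx hy => simp [map_add, hx, hy, mul_add]

/-- `E f g ((x⊗y)⊗z) = f z • g y • x`. -/
def E (f g : Module.Dual k A) : (A ⊗[k] A) ⊗[k] A →ₗ[k] A :=
  phi g ∘ₗ phi f

@[simp] lemma E_tmul (f g : Module.Dual k A) (m : A ⊗[k] A) (z : A) :
    E f g (m ⊗ₜ[k] z) = f z • phi g m := by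
  simp [E]

@[simp] lemma cyc_tmul (x y z : A) :
    cyc ((x ⊗ₜ[k] y) ⊗ₜ[k] z) = (z ⊗ₜ[k] x) ⊗ₜ[k] y := by
  simp [cyc]

lemma E_cyc (f g : Module.Dual k A) (P : A ⊗[k] A) (v : A) :
    E f g (cyc (P ⊗ₜ[k] v)) = pair2 g f P • v := by
  induction P using TensorProduct.induction_on with
  | zero => simp [cyc]
  | tmul x y => simp [mul_smul, smul_comm (f y) (g x) v, mul_comm (g x) (f y), mul_smul]
  | add x y hx hy =>
      have : (x + y) ⊗ₜ[k] v = x ⊗ₜ[k] v + y ⊗ₜ[k] v := TensorProduct.add_tmul _ _ _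
      rw [this, map_add, map_add, hx, hy, map_add, add_smul]

lemma E_cyc2 (f g : Module.Dual k A) (P : A ⊗[k] A) (v : A) :
    E f g (cyc (cyc (P ⊗ₜ[k] v))) = g v • psi f P := by
  induction P using TensorProduct.induction_on with
  | zero => simp [cyc]
  | tmul x y =>
      rw [cyc_tmul, cyc_tmul]
      simp only [E_tmul, phi_tmul, psi_tmul]
      rw [smul_comm]
  | add x y hx hy =>
      have : (x + y) ⊗ₜ[k] v = x ⊗ₜ[k] v + y ⊗ₜ[k] v := TensorProduct.add_tmul _ _ _
      rw [this, map_add, map_add, map_add, hx, hy, map_add, smul_add]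

lemma e1elem (br : A →ₗ[k] A →ₗ[k] A ⊗[k] A) (f g : Module.Dual k A) (x : A)
    (w : A ⊗[k] A) : E f g (brL br x w) = phi g (br x (phi f w)) := by
  induction w using TensorProduct.induction_on with
  | zero => simp [brL]
  | tmul u v => simp [brL, map_smul]
  | add u v hu hv => simp [map_add, hu, hv]

lemma e2elem (br : A →ₗ[k] A →ₗ[k] A ⊗[k] A) (f g : Module.Dual k A) (x : A)
    (w : A ⊗[k] A) :
    E f g (cyc (brL br x w)) = psi (pair2 g f ∘ₗ br x) w := by
  induction w using TensorProduct.induction_on with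
  | zero => simp [brL]
  | tmul u v =>
      have : brL br x (u ⊗ₜ[k] v) = (br x u) ⊗ₜ[k] v := by simp [brL]
      rw [this, E_cyc]; simp
  | add u v hu hv => simp [map_add, hu, hv]

lemma e3elem (br : A →ₗ[k] A →ₗ[k] A ⊗[k] A) (f g : Module.Dual k A) (x : A)
    (w : A ⊗[k] A) :
    E f g (cyc (cyc (brL br x w)))
      = phi g (TensorProduct.map (psi f ∘ₗ br x) LinearMap.id w) := by
  induction w using TensorProduct.induction_on with
  | zero => simp [brL]
  | tmul u v =>
      have : brL br x (u ⊗ₜ[k] v) = (br x u) ⊗ₜ[k] v := by simp [brL]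
      rw [this, E_cyc2]; simp
  | add u v hu hv => simp [map_add, hu, hv]

lemma map_neg_id (M : A →ₗ[k] A) :
    TensorProduct.map (-M) (LinearMap.id : A →ₗ[k] A)
      = - TensorProduct.map M (LinearMap.id : A →ₗ[k] A) := by
  apply TensorProduct.ext'
  intro x y
  simp [TensorProduct.neg_tmul]

lemma L9elem (br : A →ₗ[k] A →ₗ[k] A ⊗[k] A) (f g : Module.Dual k A) (c : A)
    (W : A ⊗[k] A) :
    phi g (TensorProduct.map (phi f ∘ₗ br.flip c) LinearMap.id W)
      = phi f (br (phi g W) c) := by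
  induction W using TensorProduct.induction_on with
  | zero => simp
  | tmul u v => simp [map_smul]
  | add u v hu hv => simp [map_add, hu, hv]

lemma big (br : A →ₗ[k] A →ₗ[k] A ⊗[k] A)
    (hanti : ∀ a b : A, br b a = - (TensorProduct.comm k A A) (br a b))
    (a b c : A) (f g : Module.Dual k A) :
    E f g (brL br a (br b c) + cyc (brL br b (br c a)) + cyc (cyc (brL br c (br a b))))
      = nMap br (nMap br c f b) g a + nMap br c (mMap br f b g) a
          - nMap br c f (nMap br b g a) := by
  have t2 : E f g (cyc (brL br b (br c a))) = nMap br c (mMap br f b g) a := by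
    have hm : (pair2 g f ∘ₗ br b) = -(mMap br f b g) := by
      ext v
      rw [LinearMap.comp_apply, hanti v b, map_neg, pair2_comm]
      rfl
    rw [e2elem, hanti a c, map_neg, psi_comm, hm, phi_neg, neg_neg]
    rfl
  have hM : (psi f ∘ₗ br c) = -(phi f ∘ₗ br.flip c) := by
    ext u
    rw [LinearMap.comp_apply, hanti u c, map_neg, psi_comm]
    rfl
  have t3 : E f g (cyc (cyc (brL br c (br a b)))) = - nMap br c f (nMap br b g a) := by
    rw [e3elem, hM, map_neg_id, LinearMap.neg_apply, map_neg, L9elem]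
    rfl
  rw [map_add, map_add, t2, t3, e1elem, sub_eq_add_neg]
  rfl

/-- A bilinear map `⟪-,-⟫ : A × A → A ⊗ A` is a double Poisson bracket
iff its associated trilinear maps `n`, `m` satisfy cyclicity, the quartic Stasheff
identity and the quintic Stasheff identity; moreover the assignment `⟪-,-⟫ ↦ n`
is injective. -/
theorem doublePoisson_iff_preCalabiYau (br : A →ₗ[k] A →ₗ[k] A ⊗[k] A) :
    (IsDoublePoisson br ↔
      ((∀ (a b : A) (f g : Module.Dual k A), mMap br f b g a = - g (nMap br a f b)) ∧
       (∀ (a b c : A) (f : Module.Dual k A),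
          nMap br (a * b) f c = nMap br a (dL b f) c + a * nMap br b f c) ∧
       (∀ (a b c : A) (f g : Module.Dual k A),
          nMap br (nMap br a f b) g c + nMap br a (mMap br f b g) c
            - nMap br a f (nMap br b g c) = 0))) ∧
    (∀ br₁ br₂ : A →ₗ[k] A →ₗ[k] A ⊗[k] A,
      (∀ (a b : A) (f : Module.Dual k A), nMap br₁ a f b = nMap br₂ a f b) → br₁ = br₂) := by
  constructor
  · constructor
    · rintro ⟨hanti, hleib, hjac⟩
      refine ⟨?_, ?_, ?_⟩
      · intro a b f g
        have h1 : nMap br a f b = - psi f (br a b) := by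
          rw [nMap_eq, hanti a b, map_neg]; rfl
        rw [h1, map_neg, neg_neg, apply_psi, mMap_apply]
      · intro a b c f
        rw [nMap_eq, nMap_eq, nMap_eq, hleib c a b, map_add, phi_rAct, phi_lAct]
      · intro a b c f g
        have h := big br hanti c b a f g
        rw [hjac c b a, map_zero] at h
        exact h.symm
    · rintro ⟨hcyc, hquart, hquint⟩
      have hanti : ∀ a b : A, br b a = - (TensorProduct.comm k A A) (br a b) := by
        intro a b
        have key : ∀ f g : Module.Dual k A,
            g (phi f (br b a + (TensorProduct.comm k A A) (br a b))) = 0 := by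
          intro f g
          have h1 := hcyc a b f g
          rw [mMap_apply, nMap_eq] at h1
          rw [map_add, map_add]
          have h2 : phi f ((TensorProduct.comm k A A) (br a b)) = psi f (br a b) := rfl
          rw [h2, apply_psi, h1]
          ring
        have h0 : br b a + (TensorProduct.comm k A A) (br a b) = 0 :=
          sep _ (fun f => (Module.forall_dual_apply_eq_zero_iff k _).mp (fun g => key f g))
        exact eq_neg_of_add_eq_zero_left h0
      refine ⟨hanti, ?_, ?_⟩
      · intro a b c
        apply sep_eq
        intro f
        have h := hquart b c a f
        rw [nMap_eq, nMap_eq, nMap_eq] at h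
        rw [map_add, phi_rAct, phi_lAct]
        exact h
      · intro a b c
        refine sep _ (fun f => sep _ (fun g => ?_))
        exact (big br hanti a b c f g).trans (hquint c b a f g)
  · intro br₁ br₂ h
    apply LinearMap.ext; intro b
    apply LinearMap.ext; intro a
    exact sep_eq _ _ (fun f => h a b f)
end
end

section
/- A k-bilinear map ⟪−,−⟫ : A × A → A ⊗ A satisfies the Leibniz condition ⟪a,bc⟫ = ⟪a,b⟫·c + b·⟪a,c⟫ for all a, b, c ∈ A if and only if its associated trilinear map n satisfies the quartic Stasheff identity n(ab, f, c) = n(a, b·f, c) + a·n(b, f, c) for all a, b, c ∈ A and f ∈ A*. (This is the equivalence, proved in Theorem 5.1, between condition (ii) of a double Poisson bracket and the Stasheff identity SI(4) restricted to the component A ⊗ A ⊗ A*[−1] ⊗ A.) -/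
open TensorProduct

noncomputable section

variable {k : Type*} [Field k] [CharZero k]
variable {A : Type*} [NonUnitalRing A] [Module k A] [SMulCommClass k A A] [IsScalarTower k A A]

set_option linter.unusedSectionVars false in
lemma tensor_ext' {x : A ⊗[k] A}
    (h : ∀ f : Module.Dual k A,
      TensorProduct.rid k A (TensorProduct.map LinearMap.id f x) = 0) : x = 0 := by
  classical
  let b := Module.Basis.ofVectorSpace k A
  let E : A ⊗[k] A ≃ₗ[k] (_ →₀ A) :=
    (LinearEquiv.lTensor A b.repr).trans (TensorProduct.finsuppScalarRight k k A _)
  have key : ∀ i (y : A ⊗[k] A),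
      E y i = TensorProduct.rid k A (TensorProduct.map LinearMap.id (b.coord i) y) := by
    intro i y
    induction y using TensorProduct.induction_on with
    | zero => simp
    | tmul m n =>
        simp [E, TensorProduct.finsuppScalarRight_apply_tmul_apply, Module.Basis.coord_apply,
          mul_comm]
    | add u v hu hv => simp [map_add, hu, hv]
  have : E x = 0 := by
    ext i
    rw [key i x, h (b.coord i)]
    simp
  simpa using congrArg E.symm this

set_option linter.unusedSectionVars false in
lemma aux_r (f : Module.Dual k A) (b : A) (y : A ⊗[k] A) :
    TensorProduct.rid k A (TensorProduct.map LinearMap.id f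
      (TensorProduct.map (LinearMap.id (M := A)) (LinearMap.mulRight k b) y)) =
    TensorProduct.rid k A (TensorProduct.map LinearMap.id (f ∘ₗ LinearMap.mulRight k b) y) := by
  induction y using TensorProduct.induction_on with
  | zero => simp
  | tmul u v => simp
  | add u v hu hv => simp [map_add, hu, hv]

set_option linter.unusedSectionVars false in
lemma aux_l (f : Module.Dual k A) (a : A) (y : A ⊗[k] A) :
    TensorProduct.rid k A (TensorProduct.map LinearMap.id f
      (TensorProduct.map (LinearMap.mulLeft k a) (LinearMap.id (M := A)) y)) =
    a * TensorProduct.rid k A (TensorProduct.map LinearMap.id f y) := by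
  induction y using TensorProduct.induction_on with
  | zero => simp
  | tmul u v => simp [mul_smul_comm]
  | add u v hu hv => simp [map_add, hu, hv, mul_add]

/-- The Leibniz condition is equivalent to the quartic Stasheff
identity `n(ab,f,c) = n(a, b·f, c) + a·n(b,f,c)`. -/
theorem leibniz_iff_quarticStasheff (br : A →ₗ[k] A →ₗ[k] A ⊗[k] A) :
    (∀ a b c : A, br a (b * c) = rAct c (br a b) + lAct b (br a c)) ↔
    (∀ (a b c : A) (f : Module.Dual k A),
      nMap br (a * b) f c = nMap br a (dL b f) c + a * nMap br b f c) := by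
  constructor
  · intro hL a b c f
    rw [nMap, hL c a b, map_add, map_add]
    rw [nMap, nMap, dL, rAct, lAct, aux_r, aux_l]
  · intro hS a b c
    have key : ∀ f : Module.Dual k A,
        TensorProduct.rid k A (TensorProduct.map LinearMap.id f
          (br a (b * c) - (rAct c (br a b) + lAct b (br a c)))) = 0 := by
      intro f
      have := hS b c a f
      rw [nMap, nMap, nMap, dL] at this
      simp only [map_sub, map_add, rAct, lAct]
      rw [aux_r, aux_l, this]
      exact sub_self _
    have := tensor_ext' key
    rw [sub_eq_zero] at this
    exact this
end
end

section
/- If a k-bilinear map ⟪−,−⟫ : A × A → A ⊗ A satisfies the antisymmetry condition (i) and the Leibniz condition (ii), then its associated trilinear maps satisfy m(f, a, g·b) = m(f, a, g)·b − f·n(a, g, b) in A* for all a, b ∈ A and f, g ∈ A*, where the A-actions on A* are (a·f)(c) = f(ca) and (f·b)(c) = f(bc). (This is the Stasheff identity SI(4) on the component A*[−1] ⊗ A ⊗ A*[−1] ⊗ A, which the proof of Theorem 5.1 deduces from the restricted identity by cyclic rotation.) -/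
open TensorProduct

noncomputable section

variable {k : Type*} [Field k] [CharZero k]
variable {A : Type*} [NonUnitalRing A] [Module k A] [SMulCommClass k A A] [IsScalarTower k A A]

lemma claimA (f g : Module.Dual k A) (b : A) (t : A ⊗[k] A) :
    pair2 f g ((TensorProduct.comm k A A) (lAct b ((TensorProduct.comm k A A) t)))
      = pair2 f (dR g b) t := by
  induction t using TensorProduct.induction_on with
  | zero => simp
  | tmul u v => simp [pair2, lAct, dR]
  | add x y hx hy => simp only [map_add, hx, hy]

lemma claimB (f g : Module.Dual k A) (c : A) (s : A ⊗[k] A) :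
    pair2 f g ((TensorProduct.comm k A A) (rAct c ((TensorProduct.comm k A A) s)))
      = f ((TensorProduct.rid k A (TensorProduct.map LinearMap.id g s)) * c) := by
  induction s using TensorProduct.induction_on with
  | zero => simp
  | tmul u v =>
      simp [pair2, rAct, smul_mul_assoc, mul_comm]
  | add x y hx hy => simp only [map_add, add_mul, map_add, hx, hy]

/-- If the bracket satisfies antisymmetry (i) and Leibniz (ii), then
`m(f, a, g·b) = m(f,a,g)·b − f·n(a,g,b)` in `A*` (the Stasheff identity SI(4) on the
component `A*[-1] ⊗ A ⊗ A*[-1] ⊗ A`). -/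
theorem quarticStasheff_on_dual_component (br : A →ₗ[k] A →ₗ[k] A ⊗[k] A)
    (h1 : ∀ a b : A, br b a = - (TensorProduct.comm k A A) (br a b))
    (h2 : ∀ a b c : A, br a (b * c) = rAct c (br a b) + lAct b (br a c)) :
    ∀ (a b : A) (f g : Module.Dual k A),
      mMap br f a (dR g b) = dR (mMap br f a g) b - dR f (nMap br a g b) := by
  intro a b f g
  ext c
  have hb : br (b * c) a
      = (TensorProduct.comm k A A) (rAct c ((TensorProduct.comm k A A) (br b a)))
        + (TensorProduct.comm k A A) (lAct b ((TensorProduct.comm k A A) (br c a))) := by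
    rw [h1 a (b * c), h2 a b c, h1 b a, h1 c a]
    simp only [map_add, map_neg, neg_add, neg_neg]
  show pair2 f (dR g b) (br c a)
      = pair2 f g (br (b * c) a) - f (nMap br a g b * c)
  rw [hb, map_add, claimB, claimA, nMap]
  ring
end
end

section
/- Let ⟪−,−⟫ be a double Poisson bracket on A and define {a,b} := μ(⟪a,b⟫), where μ : A ⊗ A → A is the multiplication map. Then {−,−} descends to a well-defined k-bilinear bracket on the quotient vector space A/[A,A], and this induced bracket makes A/[A,A] a Lie algebra over k. (This is the degree d = 0 case, with zero differential, of Proposition 3.3.) -/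
open TensorProduct

noncomputable section

variable {k : Type*} [Field k] [CharZero k]
variable {A : Type*} [NonUnitalRing A] [Module k A] [SMulCommClass k A A] [IsScalarTower k A A]

/-- The multiplication map `μ : A ⊗ A → A`. -/
def mu : A ⊗[k] A →ₗ[k] A := TensorProduct.lift (LinearMap.mul k A)

/-- The `k`-linear span `[A,A]` of all commutators `ab − ba`. -/
def commSpan : Submodule k A := Submodule.span k {x : A | ∃ a b : A, x = a * b - b * a}

section Aux
variable (br : A →ₗ[k] A →ₗ[k] A ⊗[k] A)

lemma comm_mem' (a b : A) : a * b - b * a ∈ commSpan (k := k) (A := A) :=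
  Submodule.subset_span ⟨a, b, rfl⟩

lemma mu_tmul (u v : A) : mu (k := k) (u ⊗ₜ v) = u * v := rfl

lemma mu_comm_sub_mem (x : A ⊗[k] A) :
    mu ((TensorProduct.comm k A A) x) - mu x ∈ commSpan (k := k) (A := A) := by
  induction x using TensorProduct.induction_on with
  | zero => simp
  | tmul u v => simpa [mu_tmul] using comm_mem' v u
  | add x y hx hy =>
    have : mu ((TensorProduct.comm k A A) (x + y)) - mu (x + y)
        = (mu ((TensorProduct.comm k A A) x) - mu x)
          + (mu ((TensorProduct.comm k A A) y) - mu y) := by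
      simp only [map_add]; abel
    rw [this]; exact Submodule.add_mem _ hx hy

lemma mu_rAct (c : A) (x : A ⊗[k] A) : mu (rAct c x) = mu x * c := by
  induction x using TensorProduct.induction_on with
  | zero => simp
  | tmul u v => simp [rAct, mu_tmul, mul_assoc]
  | add x y hx hy => simp [map_add, hx, hy, add_mul]

lemma mu_lAct (b : A) (x : A ⊗[k] A) : mu (lAct b x) = b * mu x := by
  induction x using TensorProduct.induction_on with
  | zero => simp
  | tmul u v => simp [lAct, mu_tmul, mul_assoc]
  | add x y hx hy => simp [map_add, hx, hy, mul_add]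

def mu3 : (A ⊗[k] A) ⊗[k] A →ₗ[k] A := mu ∘ₗ TensorProduct.map mu LinearMap.id

lemma mu3_tmul (y : A ⊗[k] A) (w : A) : mu3 (k := k) (y ⊗ₜ w) = mu y * w := rfl

lemma cyc_tmul_s6 (u v w : A) : cyc (k := k) ((u ⊗ₜ v) ⊗ₜ w) = (w ⊗ₜ u) ⊗ₜ v := by
  simp [cyc]

end Aux
set_option linter.unusedSectionVars false

lemma mu3_cyc_sub_mem (t : (A ⊗[k] A) ⊗[k] A) :
    mu3 (cyc t) - mu3 t ∈ commSpan (k := k) (A := A) := by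
  induction t using TensorProduct.induction_on with
  | zero => simp
  | tmul x w =>
    induction x using TensorProduct.induction_on with
    | zero => simp
    | tmul u v =>
      rw [cyc_tmul_s6, mu3_tmul, mu3_tmul, mu_tmul, mu_tmul]
      simpa [mul_assoc] using comm_mem' w (u * v)
    | add x y hx hy =>
      have : cyc (k := k) ((x + y) ⊗ₜ w) = cyc (x ⊗ₜ w) + cyc (y ⊗ₜ w) := by
        rw [TensorProduct.add_tmul, map_add]
      rw [this, TensorProduct.add_tmul]
      have e : mu3 (cyc (x ⊗ₜ w) + cyc (y ⊗ₜ w)) - mu3 ((x ⊗ₜ w) + (y ⊗ₜ w))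
          = (mu3 (cyc (x ⊗ₜ[k] w)) - mu3 (x ⊗ₜ w)) + (mu3 (cyc (y ⊗ₜ[k] w)) - mu3 (y ⊗ₜ w)) := by
        simp only [map_add]; abel
      rw [e]; exact Submodule.add_mem _ hx hy
  | add x y hx hy =>
    have e : mu3 (cyc (x + y)) - mu3 (x + y)
        = (mu3 (cyc x) - mu3 x) + (mu3 (cyc y) - mu3 y) := by
      simp only [map_add]; abel
    rw [e]; exact Submodule.add_mem _ hx hy

lemma brL_tmul (br : A →ₗ[k] A →ₗ[k] A ⊗[k] A) (a u v : A) :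
    brL br a (u ⊗ₜ v) = (br a u) ⊗ₜ v := rfl

lemma comm_comm' (y : A ⊗[k] A) :
    (TensorProduct.comm k A A) ((TensorProduct.comm k A A) y) = y := by
  induction y using TensorProduct.induction_on <;> simp [*]

section WithBr
variable (br : A →ₗ[k] A →ₗ[k] A ⊗[k] A) (h : IsDoublePoisson br)
include h

lemma key3 (a : A) (x : A ⊗[k] A) :
    mu (br a (mu x)) - mu3 (brL br a x)
      - mu3 (brL br a ((TensorProduct.comm k A A) x)) ∈ commSpan (k := k) (A := A) := by
  induction x using TensorProduct.induction_on with
  | zero => simp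
  | tmul u v =>
    rw [TensorProduct.comm_tmul, brL_tmul, brL_tmul, mu3_tmul, mu3_tmul, mu_tmul,
      h.2.1 a u v, map_add, mu_rAct, mu_lAct]
    have e : mu (br a u) * v + u * mu (br a v) - mu (br a u) * v - mu (br a v) * u
        = u * mu (br a v) - mu (br a v) * u := by abel
    rw [e]; exact comm_mem' u (mu (br a v))
  | add x y hx hy =>
    have e : mu (br a (mu (x + y))) - mu3 (brL br a (x + y))
        - mu3 (brL br a ((TensorProduct.comm k A A) (x + y)))
        = (mu (br a (mu x)) - mu3 (brL br a x)
            - mu3 (brL br a ((TensorProduct.comm k A A) x)))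
          + (mu (br a (mu y)) - mu3 (brL br a y)
            - mu3 (brL br a ((TensorProduct.comm k A A) y))) := by
      simp only [map_add]; abel
    rw [e]; exact Submodule.add_mem _ hx hy

lemma comm_br (b c : A) : (TensorProduct.comm k A A) (br b c) = - br c b := by
  rw [h.1 c b, map_neg, comm_comm']

lemma antisym_mem (a b : A) :
    mu (br a b) + mu (br b a) ∈ commSpan (k := k) (A := A) := by
  have e : mu (br a b) + mu (br b a)
      = -(mu ((TensorProduct.comm k A A) (br a b)) - mu (br a b)) := by
    rw [h.1 a b, map_neg]; abel
  rw [e]; exact Submodule.neg_mem _ (mu_comm_sub_mem _)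

end WithBr
section WithBr2
variable (br : A →ₗ[k] A →ₗ[k] A ⊗[k] A) (h : IsDoublePoisson br)

/-- `P a b c = μ₃(⟪a, ⟪b,c⟫⟫_L)` -/
def Pm (a b c : A) : A := mu3 (brL br a (br b c))

include h

lemma red_mem (a b c : A) :
    mu (br a (mu (br b c))) - (Pm br a b c - Pm br a c b) ∈ commSpan (k := k) (A := A) := by
  have h0 := key3 br h a (br b c)
  rw [comm_br br h b c] at h0
  have e : mu (br a (mu (br b c))) - (Pm br a b c - Pm br a c b)
      = mu (br a (mu (br b c))) - mu3 (brL br a (br b c))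
        - mu3 (brL br a (-(br c b))) := by
    simp only [Pm, map_neg]; abel
  rw [e]; exact h0

lemma J1_mem (a b c : A) :
    Pm br a b c + Pm br b c a + Pm br c a b ∈ commSpan (k := k) (A := A) := by
  have e0 : mu3 (brL br a (br b c)) + mu3 (cyc (brL br b (br c a)))
      + mu3 (cyc (cyc (brL br c (br a b)))) = 0 := by
    have := congrArg (mu3 (k := k) (A := A)) (h.2.2 a b c)
    simpa [map_add] using this
  set t2 := brL br b (br c a)
  set t3 := brL br c (br a b)
  have e : Pm br a b c + Pm br b c a + Pm br c a b
      = (mu3 (brL br a (br b c)) + mu3 (cyc t2) + mu3 (cyc (cyc t3)))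
        - ((mu3 (cyc t2) - mu3 t2) + ((mu3 (cyc (cyc t3)) - mu3 (cyc t3))
          + (mu3 (cyc t3) - mu3 t3))) := by
    simp only [Pm]; abel
  rw [e, e0, zero_sub]
  exact Submodule.neg_mem _ (Submodule.add_mem _ (mu3_cyc_sub_mem _)
    (Submodule.add_mem _ (mu3_cyc_sub_mem _) (mu3_cyc_sub_mem _)))

lemma jac_mem (a b c : A) :
    mu (br a (mu (br b c))) - mu (br (mu (br a b)) c) - mu (br b (mu (br a c)))
      ∈ commSpan (k := k) (A := A) := by
  have h1 := red_mem br h a b c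
  have h3 := red_mem br h b a c
  have hY := red_mem br h c a b
  have hA := antisym_mem br h (mu (br a b)) c
  have h2 : mu (br (mu (br a b)) c) + (Pm br c a b - Pm br c b a)
      ∈ commSpan (k := k) (A := A) := by
    have e : mu (br (mu (br a b)) c) + (Pm br c a b - Pm br c b a)
        = (mu (br (mu (br a b)) c) + mu (br c (mu (br a b))))
          - (mu (br c (mu (br a b))) - (Pm br c a b - Pm br c b a)) := by abel
    rw [e]; exact Submodule.sub_mem _ hA hY
  have h4 := J1_mem br h a b c
  have h5 := J1_mem br h a c b
  have e : mu (br a (mu (br b c))) - mu (br (mu (br a b)) c) - mu (br b (mu (br a c)))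
      = (mu (br a (mu (br b c))) - (Pm br a b c - Pm br a c b))
        - (mu (br (mu (br a b)) c) + (Pm br c a b - Pm br c b a))
        - (mu (br b (mu (br a c))) - (Pm br b a c - Pm br b c a))
        + (Pm br a b c + Pm br b c a + Pm br c a b)
        - (Pm br a c b + Pm br c b a + Pm br b a c) := by abel
  rw [e]
  exact Submodule.sub_mem _ (Submodule.add_mem _
    (Submodule.sub_mem _ (Submodule.sub_mem _ h1 h2) h3) h4) h5

lemma leib_mem (a b c : A) :
    mu (br a (b * c - c * b)) ∈ commSpan (k := k) (A := A) := by
  have e : mu (br a (b * c - c * b))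
      = (mu (br a b) * c - c * mu (br a b)) - (mu (br a c) * b - b * mu (br a c)) := by
    rw [map_sub, map_sub, h.2.1 a b c, h.2.1 a c b]
    simp only [map_add, mu_rAct, mu_lAct]
    abel
  rw [e]
  exact Submodule.sub_mem _ (comm_mem' _ _) (comm_mem' _ _)

end WithBr2
section WithBr3
variable (br : A →ₗ[k] A →ₗ[k] A ⊗[k] A) (h : IsDoublePoisson br)

/-- The bracket composed with the quotient projection, as a bilinear map `A → A → A/[A,A]`. -/
def L2 : A →ₗ[k] A →ₗ[k] A ⧸ (commSpan (k := k) (A := A)) :=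
  (br.compr₂ mu).compr₂ (commSpan (k := k) (A := A)).mkQ

lemma L2_apply (a b : A) :
    L2 br a b = Submodule.Quotient.mk (mu (br a b)) := rfl

include h

lemma L2_ker (a : A) : commSpan (k := k) (A := A) ≤ LinearMap.ker (L2 br a) := by
  refine Submodule.span_le.mpr ?_
  rintro x ⟨b, c, rfl⟩
  simp only [SetLike.mem_coe, LinearMap.mem_ker, L2_apply]
  rw [Submodule.Quotient.mk_eq_zero]
  exact leib_mem br h a b c

/-- Descend in the second variable, linearly in the first. -/
def L1 : A →ₗ[k] (A ⧸ (commSpan (k := k) (A := A))) →ₗ[k] A ⧸ (commSpan (k := k) (A := A)) where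
  toFun a := (commSpan (k := k) (A := A)).liftQ (L2 br a) (L2_ker br h a)
  map_add' a a' := by
    apply LinearMap.ext
    intro q
    obtain ⟨b, rfl⟩ := (commSpan (k := k) (A := A)).mkQ_surjective q
    simp [Submodule.liftQ_apply, L2_apply, map_add]
  map_smul' r a := by
    apply LinearMap.ext
    intro q
    obtain ⟨b, rfl⟩ := (commSpan (k := k) (A := A)).mkQ_surjective q
    simp [Submodule.liftQ_apply, L2_apply, map_smul]

lemma L1_apply (a b : A) :
    L1 br h a (Submodule.Quotient.mk b) = Submodule.Quotient.mk (mu (br a b)) := rfl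

lemma L1_ker : commSpan (k := k) (A := A) ≤ LinearMap.ker (L1 br h) := by
  refine Submodule.span_le.mpr ?_
  rintro x ⟨b, c, rfl⟩
  simp only [SetLike.mem_coe, LinearMap.mem_ker]
  apply LinearMap.ext
  intro q
  obtain ⟨d, rfl⟩ := (commSpan (k := k) (A := A)).mkQ_surjective q
  rw [Submodule.mkQ_apply, L1_apply, LinearMap.zero_apply,
    Submodule.Quotient.mk_eq_zero]
  have hA := antisym_mem br h (b * c - c * b) d
  have hL := leib_mem br h d b c
  have e : mu (br (b * c - c * b) d)
      = (mu (br (b * c - c * b) d) + mu (br d (b * c - c * b)))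
        - mu (br d (b * c - c * b)) := by abel
  rw [e]; exact Submodule.sub_mem _ hA hL

/-- The induced bracket on the quotient. -/
def Lfull : (A ⧸ (commSpan (k := k) (A := A))) →ₗ[k]
    (A ⧸ (commSpan (k := k) (A := A))) →ₗ[k] A ⧸ (commSpan (k := k) (A := A)) :=
  (commSpan (k := k) (A := A)).liftQ (L1 br h) (L1_ker br h)

lemma Lfull_apply (a b : A) :
    Lfull br h (Submodule.Quotient.mk a) (Submodule.Quotient.mk b)
      = Submodule.Quotient.mk (mu (br a b)) := rfl

end WithBr3
/-- If `⟪-,-⟫` is a double Poisson bracket on `A`, then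
`{a,b} := μ(⟪a,b⟫)` descends to a well-defined bilinear bracket on `A/[A,A]` which
makes `A/[A,A]` a Lie algebra over `k`. -/
theorem descends_to_lie_bracket_on_quotient (br : A →ₗ[k] A →ₗ[k] A ⊗[k] A)
    (h : IsDoublePoisson br) :
    ∃ L : (A ⧸ (commSpan (k := k) (A := A))) →ₗ[k]
        (A ⧸ (commSpan (k := k) (A := A))) →ₗ[k] (A ⧸ (commSpan (k := k) (A := A))),
      (∀ a b : A, L (Submodule.Quotient.mk a) (Submodule.Quotient.mk b)
          = Submodule.Quotient.mk (mu (br a b))) ∧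
      (∀ x, L x x = 0) ∧
      (∀ x y z, L x (L y z) = L (L x y) z + L y (L x z)) := by
  refine ⟨Lfull br h, fun a b => rfl, ?_, ?_⟩
  · intro x
    obtain ⟨a, rfl⟩ := (commSpan (k := k) (A := A)).mkQ_surjective x
    rw [Submodule.mkQ_apply, Lfull_apply, Submodule.Quotient.mk_eq_zero]
    have h2 : mu (br a a) + mu (br a a) ∈ commSpan (k := k) (A := A) :=
      antisym_mem br h a a
    have e : mu (br a a) = (2 : k)⁻¹ • (mu (br a a) + mu (br a a)) := by
      rw [← two_smul k (mu (br a a)), smul_smul,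
        inv_mul_cancel₀ (two_ne_zero : (2 : k) ≠ 0), one_smul]
    rw [e]
    exact Submodule.smul_mem _ _ h2
  · intro x y z
    obtain ⟨a, rfl⟩ := (commSpan (k := k) (A := A)).mkQ_surjective x
    obtain ⟨b, rfl⟩ := (commSpan (k := k) (A := A)).mkQ_surjective y
    obtain ⟨c, rfl⟩ := (commSpan (k := k) (A := A)).mkQ_surjective z
    simp only [Submodule.mkQ_apply, Lfull_apply]
    rw [← Submodule.mkQ_apply, ← Submodule.mkQ_apply, ← Submodule.mkQ_apply, ← map_add,
      Submodule.mkQ_apply, Submodule.mkQ_apply]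
    rw [Submodule.Quotient.eq]
    have := jac_mem br h a b c
    have e : mu (br a (mu (br b c))) - (mu (br (mu (br a b)) c) + mu (br b (mu (br a c))))
        = mu (br a (mu (br b c))) - mu (br (mu (br a b)) c) - mu (br b (mu (br a c))) := by
      abel
    rw [e]; exact this
end
end

section
/- Let φ : (A, ⟪−,−⟫_A) → (B, ⟪−,−⟫_B) be a morphism of double Poisson algebras, and define n_φ(a, f, b) := n_A(a, f∘φ, b) and m_φ(f, a, g) := m_B(f, φ(a), g) as above. Then g(φ(n_φ(a, f, b))) = m_φ(g, a, f)(φ(b)) for all a, b ∈ A and f, g ∈ B*; equivalently, the bilinear form γ_φ on E_φ = A ⊕ B* is cyclically invariant with respect to the mixed triple product on E_φ. (This is the cyclicity property of γ_φ with respect to m₃^φ established in the proof of Theorem 5.5, in the degree 0, trivially graded case.) -/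
open TensorProduct

noncomputable section

variable {k : Type*} [Field k] [CharZero k]
variable {A : Type*} [NonUnitalRing A] [Module k A] [SMulCommClass k A A] [IsScalarTower k A A]

variable {B : Type*} [NonUnitalRing B] [Module k B] [SMulCommClass k B B]
  [IsScalarTower k B B]

/-- A morphism of double Poisson algebras: an algebra morphism intertwining the
brackets, `(φ ⊗ φ)(⟪a,a'⟫_A) = ⟪φ(a), φ(a')⟫_B`. -/
def IsDPMorphism (brA : A →ₗ[k] A →ₗ[k] A ⊗[k] A) (brB : B →ₗ[k] B →ₗ[k] B ⊗[k] B)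
    (φ : A →ₙₐ[k] B) : Prop :=
  ∀ a a' : A,
    TensorProduct.map (φ : A →ₗ[k] B) (φ : A →ₗ[k] B) (brA a a') = brB (φ a) (φ a')

/-- The mixed triple product `n_φ(a, f, b) := n_A(a, f∘φ, b)` for `f ∈ B*`. -/
def nPhi (brA : A →ₗ[k] A →ₗ[k] A ⊗[k] A) (φ : A →ₙₐ[k] B)
    (a : A) (f : Module.Dual k B) (b : A) : A :=
  nMap brA a (f ∘ₗ (φ : A →ₗ[k] B)) b

/-- The mixed triple product `m_φ(f, a, g) := m_B(f, φ(a), g)` for `f, g ∈ B*`. -/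
def mPhi (brB : B →ₗ[k] B →ₗ[k] B ⊗[k] B) (φ : A →ₙₐ[k] B)
    (f : Module.Dual k B) (a : A) (g : Module.Dual k B) : Module.Dual k B :=
  mMap brB f (φ a) g

/-- Cyclicity of the form `γ_φ` with respect to the mixed triple
product: `g(φ(n_φ(a,f,b))) = m_φ(g,a,f)(φ(b))` for all `a, b ∈ A`, `f, g ∈ B*`. -/
theorem mixed_cyclicity (brA : A →ₗ[k] A →ₗ[k] A ⊗[k] A)
    (brB : B →ₗ[k] B →ₗ[k] B ⊗[k] B) (hA : IsDoublePoisson brA)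
    (hB : IsDoublePoisson brB) (φ : A →ₙₐ[k] B) (hφ : IsDPMorphism brA brB φ) :
    ∀ (a b : A) (f g : Module.Dual k B),
      g (φ (nPhi brA φ a f b)) = mPhi brB φ g a f (φ b) := by
  intro a b f g
  have h := hφ b a
  unfold nPhi nMap mPhi mMap pair2
  simp only [LinearMap.comp_apply, LinearMap.flip_apply]
  rw [← h]
  induction brA b a using TensorProduct.induction_on with
  | zero => simp
  | tmul u v => simp [mul_comm]
  | add x y hx hy => simp only [map_add, LinearMap.add_apply] at hx hy ⊢; rw [hx, hy]
end
end
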